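/- Uniform bound for the truncated oscillatory boundary integral under polynomial decay: let β > 1/2 and ε > 0. There is a constant C depending only on β such that for every h ∈ C¹([0,∞)) with |h(τ)| ≤ ε (1+τ)^{−β} and |h'(τ)| ≤ ε (1+τ)^{−1−β} for all τ ≥ 0, one has for all ξ ∈ ℝ and all t ≥ 0: | ∫₀ᵗ ξ e^{−i ξ² τ/2} h(τ) dτ | ≤ C ε. -/

import Mathlib

open MeasureTheory Set Filter
open intervalIntegral


private lemma osc_cont_rpow (p : ℝ) {a b : ℝ} (h0a : 0 ≤ a) (hab : a ≤ b) :
    ContinuousOn (fun τ : ℝ => (1+τ) ^ p) (uIcc a b) := by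
  apply ContinuousOn.rpow_const ((continuous_const.add continuous_id).continuousOn)
  intro x hx
  rw [uIcc_of_le hab] at hx
  left
  exact (by nlinarith [hx.1] : (0:ℝ) < 1 + x).ne'

private lemma osc_norm_phase (ξ τ : ℝ) :
    ‖Complex.exp (-Complex.I * (ξ:ℂ)^2 * (τ:ℂ) / 2)‖ = 1 := by
  have h : -Complex.I * (ξ:ℂ)^2 * (τ:ℂ) / 2 = ((-(ξ^2*τ/2) : ℝ) : ℂ) * Complex.I := by
    push_cast; ring
  rw [h, Complex.norm_exp_ofReal_mul_I]

private lemma osc_norm_integrand (ξ τ : ℝ) (h : ℝ → ℂ) :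
    ‖(ξ:ℂ) * Complex.exp (-Complex.I * (ξ:ℂ)^2 * (τ:ℂ)/2) * h τ‖ = |ξ| * ‖h τ‖ := by
  rw [norm_mul, norm_mul, osc_norm_phase, Complex.norm_real, Real.norm_eq_abs, mul_one]



private lemma osc_integral_rpow_head {p : ℝ} (hp1 : p < 1) {a b : ℝ}
    (h0a : 0 ≤ a) (hab : a ≤ b) :
    ∫ τ in a..b, (1+τ) ^ (-p) ≤ (1+b) ^ (1-p) / (1-p) := by
  have hp : (1:ℝ) - p ≠ 0 := sub_ne_zero.mpr (by linarith)
  have hD : ∀ τ ∈ uIcc a b,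
      HasDerivAt (fun τ : ℝ => (1+τ) ^ (1-p) / (1-p)) ((1+τ) ^ (-p)) τ := by
    intro τ hτ
    rw [uIcc_of_le hab] at hτ
    have h1τ : (0:ℝ) < 1 + τ := by nlinarith [hτ.1]
    have h := (((hasDerivAt_id τ).const_add 1).rpow_const (p := 1-p) (Or.inl h1τ.ne')).div_const (1-p)
    refine h.congr_deriv (Eq.symm ?_)
    rw [show (1:ℝ) - p - 1 = -p by ring, one_mul, mul_comm, mul_div_assoc, div_self hp, mul_one, id_eq]
  have hint : IntervalIntegrable (fun τ : ℝ => (1+τ) ^ (-p)) volume a b :=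
    (osc_cont_rpow (-p) h0a hab).intervalIntegrable
  rw [integral_eq_sub_of_hasDerivAt hD hint]
  have hFa : 0 ≤ (1+a) ^ (1-p) / (1-p) :=
    div_nonneg (Real.rpow_nonneg (by linarith) _) (by linarith)
  linarith

private lemma osc_integral_rpow_tail {β : ℝ} (hβ : 0 < β) {a b : ℝ}
    (h0a : 0 ≤ a) (hab : a ≤ b) :
    ∫ τ in a..b, (1+τ) ^ (-1-β) ≤ (1+a) ^ (-β) / β := by
  have hD : ∀ τ ∈ uIcc a b,
      HasDerivAt (fun τ : ℝ => -((1+τ) ^ (-β) / β)) ((1+τ) ^ (-1-β)) τ := by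
    intro τ hτ
    rw [uIcc_of_le hab] at hτ
    have h1τ : (0:ℝ) < 1 + τ := by nlinarith [hτ.1]
    have h := ((((hasDerivAt_id τ).const_add 1).rpow_const (p := -β) (Or.inl h1τ.ne')).div_const β).neg
    refine h.congr_deriv (Eq.symm ?_)
    rw [show -1-β = -β-1 by ring, one_mul, neg_mul, neg_div, neg_neg, mul_comm,
      mul_div_assoc, div_self hβ.ne', mul_one, id_eq]
  have hint : IntervalIntegrable (fun τ : ℝ => (1+τ) ^ (-1-β)) volume a b :=
    (osc_cont_rpow (-1-β) h0a hab).intervalIntegrable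
  rw [integral_eq_sub_of_hasDerivAt hD hint]
  have hFb : 0 ≤ (1+b) ^ (-β) / β :=
    div_nonneg (Real.rpow_nonneg (by linarith) _) hβ.le
  linarith




private lemma osc_hasDerivAt_phase (ξ τ : ℝ) :
    HasDerivAt (fun τ : ℝ => Complex.exp (-Complex.I * (ξ:ℂ)^2 * (τ:ℂ) / 2))
      ((-Complex.I * (ξ:ℂ)^2 / 2) * Complex.exp (-Complex.I * (ξ:ℂ)^2 * (τ:ℂ) / 2)) τ := by
  have h0 : HasDerivAt (fun τ : ℝ => ((τ:ℝ):ℂ)) 1 τ := by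
    simpa using (hasDerivAt_id τ).ofReal_comp
  have h1 := h0.const_mul (-Complex.I * (ξ:ℂ)^2/2)
  rw [mul_one] at h1
  have h2 := h1.cexp
  have e : (fun τ : ℝ => Complex.exp (-Complex.I * (ξ:ℂ)^2 * (τ:ℂ) / 2))
      = fun τ : ℝ => Complex.exp ((-Complex.I * (ξ:ℂ)^2/2) * (τ:ℂ)) := by
    funext x; congr 1; ring
  rw [e]
  have e2 : -Complex.I * (ξ:ℂ)^2 * (τ:ℂ) / 2 = (-Complex.I * (ξ:ℂ)^2/2) * (τ:ℂ) := by ring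
  rw [e2]
  simpa [mul_comm] using h2

private lemma osc_hasDerivAt_anti (ξ : ℝ) (hξ : ξ ≠ 0) (τ : ℝ) :
    HasDerivAt (fun τ : ℝ => (2*Complex.I/(ξ:ℂ)) * Complex.exp (-Complex.I * (ξ:ℂ)^2 * (τ:ℂ) / 2))
      ((ξ:ℂ) * Complex.exp (-Complex.I * (ξ:ℂ)^2 * (τ:ℂ) / 2)) τ := by
  have h := (osc_hasDerivAt_phase ξ τ).const_mul (2*Complex.I/(ξ:ℂ))
  refine h.congr_deriv (Eq.symm ?_)
  have hξ' : (ξ:ℂ) ≠ 0 := Complex.ofReal_ne_zero.mpr hξ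
  field_simp
  ring_nf
  simp [Complex.I_sq]



private lemma osc_crude {p : ℝ} (hp1 : p < 1) {ε : ℝ} (hε : 0 ≤ ε) (h : ℝ → ℂ)
    (Hb : ∀ τ : ℝ, 0 ≤ τ → ‖h τ‖ ≤ ε * (1+τ) ^ (-p))
    (ξ : ℝ) {a b : ℝ} (h0a : 0 ≤ a) (hab : a ≤ b) :
    ‖∫ τ in a..b, (ξ:ℂ) * Complex.exp (-Complex.I * (ξ:ℂ)^2 * (τ:ℂ)/2) * h τ‖
      ≤ |ξ| * ε * ((1+b) ^ (1-p) / (1-p)) := by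
  have hint : IntervalIntegrable (fun τ : ℝ => (1+τ) ^ (-p)) volume a b :=
    (osc_cont_rpow (-p) h0a hab).intervalIntegrable
  have hg : IntervalIntegrable (fun τ : ℝ => |ξ| * ε * (1+τ)^(-p)) volume a b :=
    hint.const_mul _
  have hb : ∀ᵐ t : ℝ ∂volume.restrict (Set.uIoc a b),
      ‖(ξ:ℂ) * Complex.exp (-Complex.I * (ξ:ℂ)^2 * (t:ℂ)/2) * h t‖ ≤ |ξ| * ε * (1+t)^(-p) := by
    refine (ae_restrict_mem measurableSet_uIoc).mono fun τ hτ => ?_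
    rw [uIoc_of_le hab] at hτ
    have hτ0 : 0 ≤ τ := le_trans h0a hτ.1.le
    rw [osc_norm_integrand, mul_assoc]
    exact mul_le_mul_of_nonneg_left (Hb τ hτ0) (abs_nonneg ξ)
  refine (intervalIntegral.norm_integral_le_abs_of_norm_le hb hg).trans ?_
  have hnn : 0 ≤ ∫ τ in a..b, |ξ| * ε * (1+τ)^(-p) := by
    apply intervalIntegral.integral_nonneg hab
    intro u hu
    have : (0:ℝ) ≤ (1+u)^(-p) := Real.rpow_nonneg (by nlinarith [hu.1]) _
    positivity
  rw [abs_of_nonneg hnn, intervalIntegral.integral_const_mul]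
  exact mul_le_mul_of_nonneg_left (osc_integral_rpow_head hp1 h0a hab) (by positivity)
private lemma osc_ibp {β ε : ℝ} (hβ : 0 < β) (hε : 0 ≤ ε) (h : ℝ → ℂ)
    (Hh : ContDiffOn ℝ 1 h (Set.Ici 0))
    (Hb : ∀ τ : ℝ, 0 ≤ τ → ‖h τ‖ ≤ ε * (1 + τ) ^ (-β))
    (Hd : ∀ τ : ℝ, 0 ≤ τ → ‖deriv h τ‖ ≤ ε * (1 + τ) ^ (-1 - β))
    {ξ : ℝ} (hξ : ξ ≠ 0) {a b : ℝ} (h0a : 0 ≤ a) (hab : a ≤ b) :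
    ‖∫ τ in a..b, (ξ:ℂ) * Complex.exp (-Complex.I * (ξ:ℂ)^2 * (τ:ℂ)/2) * h τ‖
      ≤ 2/|ξ| * (ε * (1+b)^(-β)) + 2/|ξ| * (ε * (1+a)^(-β)) + 2/|ξ| * ε * ((1+a)^(-β)/β) := by
  have hξ0 : (0:ℝ) < |ξ| := abs_pos.mpr hξ
  set u : ℝ → ℂ := fun τ => (2*Complex.I/(ξ:ℂ)) * Complex.exp (-Complex.I * (ξ:ℂ)^2 * (τ:ℂ)/2)
    with hu_def
  have hu : ∀ τ : ℝ, HasDerivAt u ((ξ:ℂ) * Complex.exp (-Complex.I * (ξ:ℂ)^2 * (τ:ℂ)/2)) τ :=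
    osc_hasDerivAt_anti ξ hξ
  have hIcc : uIcc a b ⊆ Set.Ici 0 := by
    rw [uIcc_of_le hab]; exact fun x hx => le_trans h0a hx.1
  have hcont_h : ContinuousOn h (uIcc a b) := Hh.continuousOn.mono hIcc
  have hnu : ∀ τ : ℝ, ‖u τ‖ = 2/|ξ| := by
    intro τ
    rw [hu_def]
    simp only [norm_mul, norm_div, Complex.norm_I, Complex.norm_real, Real.norm_eq_abs,
      Complex.norm_two]
    rw [osc_norm_phase, mul_one, mul_one]
  have hucont : Continuous u := by
    apply continuous_const.mul
    exact Complex.continuous_exp.comp (by continuity)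
  have hdw : ContinuousOn (derivWithin h (Set.Ici 0)) (Set.Ici 0) :=
    Hh.continuousOn_derivWithin (uniqueDiffOn_Ici 0) (le_refl 1)
  have hv' : IntervalIntegrable (deriv h) volume a b := by
    have h1 : IntervalIntegrable (derivWithin h (Set.Ici 0)) volume a b :=
      (hdw.mono hIcc).intervalIntegrable
    rw [intervalIntegrable_iff_integrableOn_Ioc_of_le hab] at h1 ⊢
    refine h1.congr_fun ?_ measurableSet_Ioc
    intro x hx
    exact derivWithin_of_mem_nhds (Ici_mem_nhds (lt_of_le_of_lt h0a hx.1))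
  have hu'cont : Continuous (fun τ : ℝ => (ξ:ℂ) * Complex.exp (-Complex.I*(ξ:ℂ)^2*(τ:ℂ)/2)) := by
    apply continuous_const.mul
    exact Complex.continuous_exp.comp (by continuity)
  have hu'int : IntervalIntegrable (fun τ : ℝ => (ξ:ℂ) * Complex.exp (-Complex.I*(ξ:ℂ)^2*(τ:ℂ)/2))
      volume a b := hu'cont.intervalIntegrable a b
  have key := integral_deriv_mul_eq_sub_of_hasDeriv_right
      (u := u) (v := h) (u' := fun τ : ℝ => (ξ:ℂ) * Complex.exp (-Complex.I*(ξ:ℂ)^2*(τ:ℂ)/2))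
      (v' := deriv h)
      (hucont.continuousOn) hcont_h
      (fun x _ => (hu x).hasDerivWithinAt.mono (fun y _ => trivial))
      (fun x hx => by
        rw [min_eq_left hab, max_eq_right hab] at hx
        have h0x : (0:ℝ) < x := lt_of_le_of_lt h0a hx.1
        exact (((Hh.contDiffAt (Ici_mem_nhds h0x)).differentiableAt
          one_ne_zero).hasDerivAt).hasDerivWithinAt)
      hu'int hv'
  have hint1 : IntervalIntegrable
      (fun τ : ℝ => (ξ:ℂ) * Complex.exp (-Complex.I*(ξ:ℂ)^2*(τ:ℂ)/2) * h τ) volume a b :=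
    ((hu'cont.continuousOn).mul hcont_h).intervalIntegrable
  have hint2 : IntervalIntegrable (fun τ : ℝ => u τ * deriv h τ) volume a b :=
    hv'.continuousOn_mul hucont.continuousOn
  have split : ∫ τ in a..b, (ξ:ℂ) * Complex.exp (-Complex.I*(ξ:ℂ)^2*(τ:ℂ)/2) * h τ
      = (u b * h b - u a * h a) - ∫ τ in a..b, u τ * deriv h τ := by
    rw [eq_sub_iff_add_eq, ← intervalIntegral.integral_add hint1 hint2, ← key]
  -- bound the remaining integral
  have hgint : IntervalIntegrable (fun τ : ℝ => 2/|ξ| * ε * (1+τ)^(-1-β)) volume a b :=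
    ((osc_cont_rpow (-1-β) h0a hab).intervalIntegrable).const_mul _
  have hbd : ∀ᵐ t : ℝ ∂volume.restrict (Set.uIoc a b),
      ‖u t * deriv h t‖ ≤ 2/|ξ| * ε * (1+t)^(-1-β) := by
    refine (ae_restrict_mem measurableSet_uIoc).mono fun τ hτ => ?_
    rw [uIoc_of_le hab] at hτ
    have hτ0 : 0 ≤ τ := le_trans h0a hτ.1.le
    rw [norm_mul, hnu, mul_assoc]
    exact mul_le_mul_of_nonneg_left (Hd τ hτ0) (by positivity)
  have hI2 : ‖∫ τ in a..b, u τ * deriv h τ‖ ≤ 2/|ξ| * ε * ((1+a)^(-β)/β) := by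
    refine (intervalIntegral.norm_integral_le_abs_of_norm_le hbd hgint).trans ?_
    have hnn : 0 ≤ ∫ τ in a..b, 2/|ξ| * ε * (1+τ)^(-1-β) := by
      apply intervalIntegral.integral_nonneg hab
      intro x hx
      have : (0:ℝ) ≤ (1+x)^(-1-β) := Real.rpow_nonneg (by nlinarith [hx.1]) _
      positivity
    rw [abs_of_nonneg hnn, intervalIntegral.integral_const_mul]
    exact mul_le_mul_of_nonneg_left (osc_integral_rpow_tail hβ h0a hab) (by positivity)
  have hub : ‖u b * h b‖ ≤ 2/|ξ| * (ε * (1+b)^(-β)) := by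
    rw [norm_mul, hnu]
    exact mul_le_mul_of_nonneg_left (Hb b (le_trans h0a hab)) (by positivity)
  have hua : ‖u a * h a‖ ≤ 2/|ξ| * (ε * (1+a)^(-β)) := by
    rw [norm_mul, hnu]
    exact mul_le_mul_of_nonneg_left (Hb a h0a) (by positivity)
  calc ‖∫ τ in a..b, (ξ:ℂ) * Complex.exp (-Complex.I * (ξ:ℂ)^2 * (τ:ℂ)/2) * h τ‖
      = ‖(u b * h b - u a * h a) - ∫ τ in a..b, u τ * deriv h τ‖ := by rw [split]
    _ ≤ ‖u b * h b - u a * h a‖ + ‖∫ τ in a..b, u τ * deriv h τ‖ := norm_sub_le _ _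
    _ ≤ (‖u b * h b‖ + ‖u a * h a‖) + ‖∫ τ in a..b, u τ * deriv h τ‖ := by
        gcongr; exact norm_sub_le _ _
    _ ≤ 2/|ξ| * (ε * (1+b)^(-β)) + 2/|ξ| * (ε * (1+a)^(-β)) + 2/|ξ| * ε * ((1+a)^(-β)/β) := by
        linarith [hub, hua, hI2]


set_option maxHeartbeats 1000000 in

/-- Uniform bound for the truncated oscillatory boundary integral under
polynomial decay of the boundary data. -/
theorem oscillatory_truncated_uniform_bound (β : ℝ) (hβ : 1/2 < β) :
    ∃ C > (0:ℝ), ∀ ε : ℝ, 0 < ε → ∀ h : ℝ → ℂ,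
      ContDiffOn ℝ 1 h (Set.Ici 0) →
      (∀ τ : ℝ, 0 ≤ τ → ‖h τ‖ ≤ ε * (1 + τ) ^ (-β)) →
      (∀ τ : ℝ, 0 ≤ τ → ‖deriv h τ‖ ≤ ε * (1 + τ) ^ (-1 - β)) →
      ∀ ξ : ℝ, ∀ t : ℝ, 0 ≤ t →
        ‖∫ τ in (0:ℝ)..t,
            (ξ : ℂ) * Complex.exp (-Complex.I * (ξ : ℂ) ^ 2 * (τ : ℂ) / 2) * h τ‖
          ≤ C * ε := by
  refine ⟨16, by norm_num, ?_⟩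
  intro ε hε h Hh Hb Hd ξ t ht
  have hβ0 : 0 < β := by linarith
  have hβinv : 1/β ≤ 2 := by rw [div_le_iff₀ hβ0]; linarith
  by_cases hξ : ξ = 0
  · subst hξ
    simp only [Complex.ofReal_zero, zero_mul, intervalIntegral.integral_zero, norm_zero]
    positivity
  have hξ0 : (0:ℝ) < |ξ| := abs_pos.mpr hξ
  rcases le_or_gt 1 |ξ| with hξ1 | hξ1
  · -- large frequency : single integration by parts on [0, t]
    refine (osc_ibp hβ0 hε.le h Hh Hb Hd hξ (le_refl (0:ℝ)) ht).trans ?_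
    have h2ξ : 2/|ξ| ≤ 2 := by
      rw [div_le_iff₀ hξ0]; nlinarith
    have h2ξ0 : (0:ℝ) ≤ 2/|ξ| := by positivity
    have hb1 : ((1:ℝ)+t) ^ (-β) ≤ 1 :=
      Real.rpow_le_one_of_one_le_of_nonpos (by linarith) (by linarith)
    have ha1 : ((1:ℝ)+0) ^ (-β) = 1 := by
      norm_num
    rw [ha1]
    have t1 : 2/|ξ| * (ε * (1+t)^(-β)) ≤ 2 * ε := by
      calc 2/|ξ| * (ε * (1+t)^(-β)) ≤ 2/|ξ| * (ε * 1) :=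
            mul_le_mul_of_nonneg_left (mul_le_mul_of_nonneg_left hb1 hε.le) h2ξ0
        _ = 2/|ξ| * ε := by ring
        _ ≤ 2 * ε := mul_le_mul_of_nonneg_right h2ξ hε.le
    have t2 : 2/|ξ| * (ε * 1) ≤ 2 * ε := by
      rw [mul_one]; exact mul_le_mul_of_nonneg_right h2ξ hε.le
    have t3 : 2/|ξ| * ε * (1/β) ≤ 4 * ε := by
      calc 2/|ξ| * ε * (1/β) ≤ 2 * ε * 2 := by
            apply mul_le_mul (mul_le_mul_of_nonneg_right h2ξ hε.le) hβinv
              (by positivity) (by positivity)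
        _ = 4 * ε := by ring
    have hone : ((1:ℝ)) / β = 1/β := rfl
    calc 2/|ξ| * (ε * (1+t)^(-β)) + 2/|ξ| * (ε * 1) + 2/|ξ| * ε * (1/β)
        ≤ 2*ε + 2*ε + 4*ε := by linarith
      _ ≤ 16 * ε := by linarith
  · -- small frequency
    set p := min β (3/4 : ℝ) with hp_def
    have hpβ : p ≤ β := min_le_left _ _
    have hp34 : p ≤ 3/4 := min_le_right _ _
    have hp2 : 1/2 < p := lt_min hβ (by norm_num)
    have hp1 : p < 1 := lt_of_le_of_lt hp34 (by norm_num)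
    have h1p : (0:ℝ) < 1 - p := by linarith
    have hinv4 : 1/(1-p) ≤ 4 := by rw [div_le_iff₀ h1p]; linarith
    have hB' : ∀ τ : ℝ, 0 ≤ τ → ‖h τ‖ ≤ ε * (1+τ) ^ (-p) := by
      intro τ hτ
      refine (Hb τ hτ).trans (mul_le_mul_of_nonneg_left ?_ hε.le)
      exact Real.rpow_le_rpow_of_exponent_le (by linarith) (by linarith)
    have hξsq : (0:ℝ) < ξ^2 := by positivity
    have hξsq1 : ξ^2 ≤ 1 := by nlinarith [abs_nonneg ξ, sq_abs ξ]
    have hinv1 : (1:ℝ) ≤ (ξ^2)⁻¹ := by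
      rw [le_inv_comm₀ one_pos hξsq, inv_one]; exact hξsq1
    set s := min t ((ξ^2)⁻¹) with hs_def
    have h0s : 0 ≤ s := le_min ht (by positivity)
    have hst : s ≤ t := min_le_left _ _
    have hs_inv : s ≤ (ξ^2)⁻¹ := min_le_right _ _
    -- split the integral
    have hu'cont : Continuous (fun τ : ℝ => (ξ:ℂ) * Complex.exp (-Complex.I*(ξ:ℂ)^2*(τ:ℂ)/2)) := by
      apply continuous_const.mul
      exact Complex.continuous_exp.comp (by continuity)
    have hfc : ContinuousOn
        (fun τ : ℝ => (ξ:ℂ) * Complex.exp (-Complex.I*(ξ:ℂ)^2*(τ:ℂ)/2) * h τ) (Set.Ici 0) :=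
      hu'cont.continuousOn.mul Hh.continuousOn
    have hi1 : IntervalIntegrable
        (fun τ : ℝ => (ξ:ℂ) * Complex.exp (-Complex.I*(ξ:ℂ)^2*(τ:ℂ)/2) * h τ) volume 0 s :=
      (hfc.mono (by rw [uIcc_of_le h0s]; exact fun x hx => hx.1)).intervalIntegrable
    have hi2 : IntervalIntegrable
        (fun τ : ℝ => (ξ:ℂ) * Complex.exp (-Complex.I*(ξ:ℂ)^2*(τ:ℂ)/2) * h τ) volume s t :=
      (hfc.mono (by rw [uIcc_of_le hst]; exact fun x hx => le_trans h0s hx.1)).intervalIntegrable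
    have hsplit : (∫ τ in (0:ℝ)..t, (ξ:ℂ) * Complex.exp (-Complex.I*(ξ:ℂ)^2*(τ:ℂ)/2) * h τ)
        = (∫ τ in (0:ℝ)..s, (ξ:ℂ) * Complex.exp (-Complex.I*(ξ:ℂ)^2*(τ:ℂ)/2) * h τ)
          + ∫ τ in s..t, (ξ:ℂ) * Complex.exp (-Complex.I*(ξ:ℂ)^2*(τ:ℂ)/2) * h τ :=
      (intervalIntegral.integral_add_adjacent_intervals hi1 hi2).symm
    -- first piece via the crude bound
    have q1 : |ξ| * (1+s) ^ (1-p) ≤ 2 := by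
      have e1 : (1:ℝ) + s ≤ 2 * (ξ^2)⁻¹ := by linarith
      have e2 : (1+s) ^ (1-p) ≤ (2 * (ξ^2)⁻¹) ^ (1-p) :=
        Real.rpow_le_rpow (by linarith) e1 h1p.le
      have e3 : (2 * (ξ^2)⁻¹ : ℝ) ^ (1-p) ≤ (2 * (ξ^2)⁻¹) ^ ((1:ℝ)/2) :=
        Real.rpow_le_rpow_of_exponent_le (by nlinarith) (by linarith)
      have e4 : ((2:ℝ) * (ξ^2)⁻¹) ^ ((1:ℝ)/2) = 2 ^ ((1:ℝ)/2) * |ξ|⁻¹ := by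
        rw [Real.mul_rpow (by norm_num) (by positivity), Real.inv_rpow (sq_nonneg ξ)]
        congr 1
        rw [← sq_abs ξ, ← Real.rpow_natCast |ξ| 2, ← Real.rpow_mul (abs_nonneg ξ)]
        norm_num
      have e5 : (2:ℝ) ^ ((1:ℝ)/2) ≤ 2 := by
        calc (2:ℝ) ^ ((1:ℝ)/2) ≤ 2 ^ ((1:ℝ)) :=
            Real.rpow_le_rpow_of_exponent_le (by norm_num) (by norm_num)
          _ = 2 := Real.rpow_one 2
      calc |ξ| * (1+s) ^ (1-p) ≤ |ξ| * (2 ^ ((1:ℝ)/2) * |ξ|⁻¹) := by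
            rw [← e4]
            exact mul_le_mul_of_nonneg_left (e2.trans e3) (abs_nonneg ξ)
        _ = 2 ^ ((1:ℝ)/2) := by field_simp
        _ ≤ 2 := e5
    have piece1 : ‖∫ τ in (0:ℝ)..s, (ξ:ℂ) * Complex.exp (-Complex.I*(ξ:ℂ)^2*(τ:ℂ)/2) * h τ‖
        ≤ 8 * ε := by
      refine (osc_crude hp1 hε.le h hB' ξ (le_refl (0:ℝ)) h0s).trans ?_
      calc |ξ| * ε * ((1+s) ^ (1-p) / (1-p))
          = (|ξ| * (1+s) ^ (1-p)) * ε * (1/(1-p)) := by ring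
        _ ≤ 2 * ε * 4 := by
            apply mul_le_mul (mul_le_mul_of_nonneg_right q1 hε.le) hinv4 (by positivity)
              (by positivity)
        _ = 8 * ε := by ring
    -- second piece
    have piece2 : ‖∫ τ in s..t, (ξ:ℂ) * Complex.exp (-Complex.I*(ξ:ℂ)^2*(τ:ℂ)/2) * h τ‖
        ≤ 8 * ε := by
      rcases le_or_gt t ((ξ^2)⁻¹) with hts | hts
      · have hst' : s = t := min_eq_left hts
        rw [hst', intervalIntegral.integral_same, norm_zero]
        positivity
      · have hs_eq : s = (ξ^2)⁻¹ := min_eq_right hts.le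
        refine (osc_ibp hβ0 hε.le h Hh Hb Hd hξ h0s hst).trans ?_
        have hK : (1+s) ^ (-β) ≤ |ξ| := by
          have k1 : (ξ^2)⁻¹ ≤ 1 + s := by rw [hs_eq]; linarith
          have k2 : (1+s) ^ (-β) ≤ ((ξ^2)⁻¹) ^ (-β) :=
            Real.rpow_le_rpow_of_nonpos (by positivity) k1 (by linarith)
          have k3 : (((ξ^2):ℝ)⁻¹) ^ (-β) = |ξ| ^ (2*β) := by
            rw [Real.inv_rpow (sq_nonneg ξ), Real.rpow_neg (sq_nonneg ξ), inv_inv,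
              ← sq_abs ξ, ← Real.rpow_natCast |ξ| 2, ← Real.rpow_mul (abs_nonneg ξ)]
            norm_num
          have k4 : |ξ| ^ (2*β) ≤ |ξ| ^ (1:ℝ) :=
            Real.rpow_le_rpow_of_exponent_ge hξ0 hξ1.le (by linarith)
          rw [Real.rpow_one] at k4
          calc (1+s) ^ (-β) ≤ ((ξ^2)⁻¹) ^ (-β) := k2
            _ = |ξ| ^ (2*β) := k3
            _ ≤ |ξ| := k4
        have hT : (1+t) ^ (-β) ≤ (1+s) ^ (-β) :=
          Real.rpow_le_rpow_of_nonpos (by linarith) (by linarith) (by linarith)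
        have hAξ : 2/|ξ| * |ξ| = 2 := div_mul_cancel₀ 2 hξ0.ne'
        have hA0 : (0:ℝ) ≤ 2/|ξ| := by positivity
        have u1 : 2/|ξ| * (ε * (1+t)^(-β)) ≤ 2 * ε := by
          calc 2/|ξ| * (ε * (1+t)^(-β)) ≤ 2/|ξ| * (ε * |ξ|) := by
                apply mul_le_mul_of_nonneg_left _ hA0
                exact mul_le_mul_of_nonneg_left (hT.trans hK) hε.le
            _ = 2/|ξ| * |ξ| * ε := by ring
            _ = 2 * ε := by rw [hAξ]
        have u2 : 2/|ξ| * (ε * (1+s)^(-β)) ≤ 2 * ε := by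
          calc 2/|ξ| * (ε * (1+s)^(-β)) ≤ 2/|ξ| * (ε * |ξ|) := by
                apply mul_le_mul_of_nonneg_left _ hA0
                exact mul_le_mul_of_nonneg_left hK hε.le
            _ = 2/|ξ| * |ξ| * ε := by ring
            _ = 2 * ε := by rw [hAξ]
        have u3 : 2/|ξ| * ε * ((1+s)^(-β)/β) ≤ 4 * ε := by
          have hKβ : (1+s)^(-β)/β ≤ |ξ| * 2 := by
            rw [div_eq_mul_one_div]
            exact mul_le_mul hK hβinv (by positivity) (abs_nonneg ξ)
          calc 2/|ξ| * ε * ((1+s)^(-β)/β) ≤ 2/|ξ| * ε * (|ξ| * 2) := by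
                apply mul_le_mul_of_nonneg_left hKβ (by positivity)
            _ = (2/|ξ| * |ξ|) * ε * 2 := by ring
            _ = 4 * ε := by rw [hAξ]; ring
        linarith
    rw [hsplit]
    calc ‖(∫ τ in (0:ℝ)..s, (ξ:ℂ) * Complex.exp (-Complex.I*(ξ:ℂ)^2*(τ:ℂ)/2) * h τ)
          + ∫ τ in s..t, (ξ:ℂ) * Complex.exp (-Complex.I*(ξ:ℂ)^2*(τ:ℂ)/2) * h τ‖
        ≤ ‖∫ τ in (0:ℝ)..s, (ξ:ℂ) * Complex.exp (-Complex.I*(ξ:ℂ)^2*(τ:ℂ)/2) * h τ‖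
          + ‖∫ τ in s..t, (ξ:ℂ) * Complex.exp (-Complex.I*(ξ:ℂ)^2*(τ:ℂ)/2) * h τ‖ :=
          norm_add_le _ _
      _ ≤ 8 * ε + 8 * ε := by linarith
      _ = 16 * ε := by ring
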